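/- arXiv:2605.17976 — 6 statements merged into one kernel-verified Lean document; each statement's English description precedes it below -/
import Mathlib

section
/- Let d ∈ ℕ, let μ ∈ ℝ^d, let S be a positive definite real d×d matrix, let a ∈ ℝ^d and λ ∈ ℝ. Then the exponentially tilted measure (multivariateGaussian μ S).tilted (fun x => λ * ⟪a, x⟫) equals multivariateGaussian (μ + λ • (S.mulVec a)) S, where ⟪a, x⟫ = ∑ᵢ aᵢ xᵢ. In words: tilting a multivariate Gaussian by the exponential of a linear functional λ⟨a,·⟩ leaves the covariance matrix S unchanged and shifts the mean by λ·S a. -/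
open MeasureTheory Matrix

section AuxGauss
open Real
open scoped MatrixOrder

private lemma gauss_norm_aux {d : ℕ} {S : Matrix (Fin d) (Fin d) ℝ} (hS : S.PosDef) :
    ∫ x : Fin d → ℝ, Real.exp (-(x ⬝ᵥ S⁻¹.mulVec x) / 2) =
      Real.sqrt ((2 * π) ^ d * S.det) := by
  classical
  set A := CFC.sqrt S with hA
  have hAA : A * A = S := CFC.sqrt_mul_sqrt_self S hS.posSemidef.nonneg
  have hAt : Aᵀ = A := by
    have := (CFC.sqrt_nonneg S).posSemidef.1
    rwa [Matrix.IsHermitian, conjTranspose_eq_transpose_of_trivial] at this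
  have hdet2 : A.det * A.det = S.det := by rw [← det_mul, hAA]
  have hdet : A.det ≠ 0 := by
    intro h; rw [h, mul_zero] at hdet2; exact hS.det_pos.ne' hdet2.symm
  have hu : IsUnit A.det := isUnit_iff_ne_zero.2 hdet
  have hAinv : A * (S⁻¹ * A) = 1 := by
    rw [← hAA, Matrix.mul_inv_rev, mul_assoc A⁻¹ A⁻¹ A, Matrix.nonsing_inv_mul A hu, mul_one,
      Matrix.mul_nonsing_inv A hu]
  have hquad : ∀ y : Fin d → ℝ, (A *ᵥ y) ⬝ᵥ S⁻¹ *ᵥ (A *ᵥ y) = y ⬝ᵥ y := by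
    intro y
    have hAy : A *ᵥ y = y ᵥ* A := by rw [← hAt, mulVec_transpose, hAt]
    rw [mulVec_mulVec, hAy, dotProduct_mulVec, vecMul_vecMul, hAinv, vecMul_one]
  have hmap : Measure.map (toLin' A) volume =
      ENNReal.ofReal |A.det⁻¹| • volume :=
    Real.map_matrix_volume_pi_eq_smul_volume_pi hdet
  have hcont : Continuous fun x : Fin d → ℝ => Real.exp (-(x ⬝ᵥ S⁻¹.mulVec x) / 2) := by
    simp only [dotProduct, mulVec]; fun_prop
  have h1 : ∫ x : Fin d → ℝ, Real.exp (-(x ⬝ᵥ S⁻¹.mulVec x) / 2) ∂(Measure.map (toLin' A) volume)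
      = ∫ y : Fin d → ℝ, Real.exp (-(y ⬝ᵥ y) / 2) := by
    rw [integral_map (by fun_prop) hcont.aestronglyMeasurable]
    simp only [toLin'_apply, hquad]
  rw [hmap, integral_smul_measure] at h1
  have h2 : ∫ y : Fin d → ℝ, Real.exp (-(y ⬝ᵥ y) / 2) = Real.sqrt (2 * π) ^ d := by
    have he : ∀ y : Fin d → ℝ, Real.exp (-(y ⬝ᵥ y) / 2) = ∏ i, Real.exp (-(1/2) * (y i)^2) := by
      intro y
      rw [← Real.exp_sum]
      congr 1
      simp only [dotProduct]
      rw [← Finset.mul_sum]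
      simp only [pow_two]
      ring
    simp_rw [he]
    rw [MeasureTheory.integral_fintype_prod_volume_eq_pow (ι := Fin d) (fun t => Real.exp (-(1/2) * t^2)),
      Fintype.card_fin, integral_gaussian, show π / (1/2) = 2 * π by ring]
  rw [h2] at h1
  rw [ENNReal.toReal_ofReal (abs_nonneg _), smul_eq_mul, abs_inv] at h1
  have habs0 : |A.det| ≠ 0 := abs_ne_zero.2 hdet
  have hint : ∫ x : Fin d → ℝ, Real.exp (-(x ⬝ᵥ S⁻¹.mulVec x) / 2)
      = |A.det| * Real.sqrt (2 * π) ^ d := by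
    rw [inv_mul_eq_iff_eq_mul₀ habs0] at h1
    exact h1
  have hAabs : |A.det| = Real.sqrt S.det := by
    rw [← hdet2, ← sq, Real.sqrt_sq_eq_abs]
  have hsp : ∀ n : ℕ, Real.sqrt ((2*π)^n) = Real.sqrt (2*π) ^ n := by
    intro n
    induction n with
    | zero => simp
    | succ k ih => rw [pow_succ, pow_succ, Real.sqrt_mul (by positivity), ih]
  rw [hint, hAabs, Real.sqrt_mul (by positivity : (0:ℝ) ≤ (2*π)^d), hsp]
  ring

private lemma key_exp_aux {d : ℕ} {S : Matrix (Fin d) (Fin d) ℝ} (hS : S.PosDef)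
    (μ a : Fin d → ℝ) (lam : ℝ) (x : Fin d → ℝ) :
    lam * (a ⬝ᵥ x) + -((x - μ) ⬝ᵥ S⁻¹.mulVec (x - μ)) / 2
      = (lam * (a ⬝ᵥ μ) + lam^2 * (a ⬝ᵥ S.mulVec a) / 2)
        + -((x - (μ + lam • S.mulVec a)) ⬝ᵥ
            S⁻¹.mulVec (x - (μ + lam • S.mulVec a))) / 2 := by
  classical
  have hu : IsUnit S.det := hS.det_pos.ne'.isUnit
  have hSt : Sᵀ = S := by
    have := hS.1
    rwa [Matrix.IsHermitian, conjTranspose_eq_transpose_of_trivial] at this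
  have hSinv : S⁻¹ * S = 1 := Matrix.nonsing_inv_mul S hu
  have hSinv' : S * S⁻¹ = 1 := Matrix.mul_nonsing_inv S hu
  set u : Fin d → ℝ := x - μ with hu'
  set w : Fin d → ℝ := lam • S.mulVec a with hw
  have hx : x - (μ + lam • S.mulVec a) = u - w := by
    rw [hu', hw, sub_add_eq_sub_sub]
  have k0 : S⁻¹.mulVec w = lam • a := by
    rw [hw, mulVec_smul, mulVec_mulVec, hSinv, one_mulVec]
  have k1 : ∀ v : Fin d → ℝ, (S.mulVec a) ⬝ᵥ S⁻¹.mulVec v = a ⬝ᵥ v := by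
    intro v
    have hSa : S.mulVec a = a ᵥ* S := by rw [← hSt, mulVec_transpose, hSt]
    rw [hSa, dotProduct_mulVec, vecMul_vecMul, hSinv', vecMul_one]
  have h1 : u ⬝ᵥ S⁻¹.mulVec w = lam * (a ⬝ᵥ u) := by
    rw [k0, dotProduct_smul, smul_eq_mul, dotProduct_comm]
  have h2 : w ⬝ᵥ S⁻¹.mulVec u = lam * (a ⬝ᵥ u) := by
    rw [hw, smul_dotProduct, smul_eq_mul, k1]
  have h3 : w ⬝ᵥ S⁻¹.mulVec w = lam^2 * (a ⬝ᵥ S.mulVec a) := by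
    rw [k0, hw, smul_dotProduct, dotProduct_smul, smul_eq_mul, smul_eq_mul,
      dotProduct_comm, sq]
    ring
  have h4 : a ⬝ᵥ x = a ⬝ᵥ u + a ⬝ᵥ μ := by
    rw [hu', dotProduct_sub]; ring
  have he : (u - w) ⬝ᵥ S⁻¹.mulVec (u - w)
      = u ⬝ᵥ S⁻¹.mulVec u - lam * (a ⬝ᵥ u) - (lam * (a ⬝ᵥ u) - lam^2 * (a ⬝ᵥ S.mulVec a)) := by
    rw [sub_dotProduct, mulVec_sub, dotProduct_sub, dotProduct_sub, h1, h2, h3]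
  rw [hx, he, h4]
  ring

end AuxGauss

open scoped NNReal ENNReal

/-- The multivariate Gaussian measure on `ℝ^d` with mean `μ` and (positive definite)
covariance matrix `S`: the measure with density
`x ↦ (√((2π)^d det S))⁻¹ exp (-(x-μ)ᵀ S⁻¹ (x-μ) / 2)` with respect to Lebesgue measure. -/
noncomputable def multivariateGaussian {d : ℕ} (μ : Fin d → ℝ)
    (S : Matrix (Fin d) (Fin d) ℝ) : Measure (Fin d → ℝ) :=
  volume.withDensity fun x =>
    ENNReal.ofReal ((Real.sqrt ((2 * Real.pi) ^ d * S.det))⁻¹ *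
      Real.exp (-((x - μ) ⬝ᵥ S⁻¹.mulVec (x - μ)) / 2))

/-- Tilting a multivariate Gaussian by the exponential of a linear functional `λ ⟨a, ·⟩`
leaves the covariance matrix `S` unchanged and shifts the mean by `λ • S a`. -/
theorem tilted_multivariateGaussian {d : ℕ} (μ : Fin d → ℝ)
    (S : Matrix (Fin d) (Fin d) ℝ) (hS : S.PosDef) (a : Fin d → ℝ) (lam : ℝ) :
    (multivariateGaussian μ S).tilted (fun x => lam * (a ⬝ᵥ x)) =
      multivariateGaussian (μ + lam • S.mulVec a) S := by
  classical
  have hdetpos := hS.det_pos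
  have h2π : (0:ℝ) < (2 * Real.pi) ^ d * S.det := by
    have := Real.pi_pos; positivity
  set c : ℝ := (Real.sqrt ((2 * Real.pi) ^ d * S.det))⁻¹ with hc
  have hsq : 0 < Real.sqrt ((2 * Real.pi) ^ d * S.det) := Real.sqrt_pos.2 h2π
  have hcpos : 0 < c := inv_pos.2 hsq
  set C : ℝ := Real.exp (lam * (a ⬝ᵥ μ) + lam^2 * (a ⬝ᵥ S.mulVec a) / 2) with hC
  have hCne : C ≠ 0 := (Real.exp_pos _).ne'
  set μ' : Fin d → ℝ := μ + lam • S.mulVec a with hμ'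
  have key : ∀ x : Fin d → ℝ,
      Real.exp (lam * (a ⬝ᵥ x)) * (c * Real.exp (-((x - μ) ⬝ᵥ S⁻¹.mulVec (x - μ)) / 2))
        = C * (c * Real.exp (-((x - μ') ⬝ᵥ S⁻¹.mulVec (x - μ')) / 2)) := by
    intro x
    rw [hC, hμ', mul_left_comm, mul_left_comm (Real.exp _), ← Real.exp_add, ← Real.exp_add,
      key_exp_aux hS μ a lam x]
  have hcontm : ∀ m : Fin d → ℝ, Continuous fun x : Fin d → ℝ =>
      c * Real.exp (-((x - m) ⬝ᵥ S⁻¹.mulVec (x - m)) / 2) := by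
    intro m
    simp only [dotProduct, mulVec, Pi.sub_apply]
    fun_prop
  have hnonneg : ∀ (m : Fin d → ℝ) (x : Fin d → ℝ),
      0 ≤ c * Real.exp (-((x - m) ⬝ᵥ S⁻¹.mulVec (x - m)) / 2) := fun m x => by positivity
  have htrans : ∀ m : Fin d → ℝ,
      ∫ x : Fin d → ℝ, Real.exp (-((x - m) ⬝ᵥ S⁻¹.mulVec (x - m)) / 2)
        = Real.sqrt ((2 * Real.pi) ^ d * S.det) := by
    intro m
    rw [integral_sub_right_eq_self (μ := volume)
      (fun y : Fin d → ℝ => Real.exp (-(y ⬝ᵥ S⁻¹.mulVec y) / 2)) m]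
    exact gauss_norm_aux hS
  have hc1 : c * Real.sqrt ((2 * Real.pi) ^ d * S.det) = 1 := by
    rw [hc, inv_mul_cancel₀ hsq.ne']
  have hZ : ∫ x, Real.exp (lam * (a ⬝ᵥ x)) ∂(multivariateGaussian μ S) = C := by
    rw [multivariateGaussian]
    rw [show (fun x : Fin d → ℝ => ENNReal.ofReal
          (c * Real.exp (-((x - μ) ⬝ᵥ S⁻¹.mulVec (x - μ)) / 2)))
        = (fun x : Fin d → ℝ => (((fun x : Fin d → ℝ =>
          (c * Real.exp (-((x - μ) ⬝ᵥ S⁻¹.mulVec (x - μ)) / 2)).toNNReal) x : ℝ≥0) : ℝ≥0∞))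
        from rfl]
    rw [integral_withDensity_eq_integral_smul ((hcontm μ).measurable.real_toNNReal) _]
    have hptw : ∀ x : Fin d → ℝ,
        ((c * Real.exp (-((x - μ) ⬝ᵥ S⁻¹.mulVec (x - μ)) / 2)).toNNReal : ℝ≥0)
            • Real.exp (lam * (a ⬝ᵥ x))
          = C * (c * Real.exp (-((x - μ') ⬝ᵥ S⁻¹.mulVec (x - μ')) / 2)) := by
      intro x
      rw [NNReal.smul_def, Real.coe_toNNReal _ (hnonneg μ x), smul_eq_mul]
      linear_combination key x
    simp_rw [hptw]
    rw [MeasureTheory.integral_const_mul, MeasureTheory.integral_const_mul, htrans μ', hc1, mul_one]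
  have hm1 : Measurable fun x : Fin d → ℝ => ENNReal.ofReal
      (c * Real.exp (-((x - μ) ⬝ᵥ S⁻¹.mulVec (x - μ)) / 2)) :=
    (hcontm μ).measurable.ennreal_ofReal
  have hm2 : Measurable fun x : Fin d → ℝ => ENNReal.ofReal
      (Real.exp (lam * (a ⬝ᵥ x)) / C) := by
    apply Measurable.ennreal_ofReal
    apply Continuous.measurable
    simp only [dotProduct]
    fun_prop
  simp only [Measure.tilted, hZ]
  rw [multivariateGaussian, multivariateGaussian, ← withDensity_mul _ hm1 hm2]
  congr 1
  funext x
  rw [Pi.mul_apply, ← ENNReal.ofReal_mul (hnonneg μ x)]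
  congr 1
  have hk := key x
  rw [mul_div_assoc', div_eq_iff hCne]
  linear_combination hk
end

section
/- Let E be a separable real Banach space, let μ be a Gaussian probability measure on E, let L : E → ℝ be a continuous linear functional and λ ∈ ℝ, and let μ_λ = μ.tilted (fun x => λ * L x). Then for every continuous linear functional φ : E → ℝ, the mean of φ is shifted by λ times the covariance of L and φ: ∫ φ x dμ_λ(x) = ∫ φ x dμ(x) + λ * Cov_μ(L, φ), where Cov_μ(L, φ) := ∫ (L x − ∫ L dμ) * (φ x − ∫ φ dμ) dμ(x). -/
open MeasureTheory ProbabilityTheory Real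
open scoped NNReal ENNReal

namespace TiltAux

lemma abs_le_exp_add (u : ℝ) : |u| ≤ exp u + exp (-u) := by
  rcases le_total 0 u with h | h
  · rw [abs_of_nonneg h]
    have := Real.add_one_le_exp u
    have := Real.exp_pos (-u)
    linarith
  · rw [abs_of_nonpos h]
    have := Real.add_one_le_exp (-u)
    have := Real.exp_pos u
    linarith

lemma exp_abs_le (u : ℝ) : exp |u| ≤ exp u + exp (-u) := by
  rcases le_total 0 u with h | h
  · rw [abs_of_nonneg h]; have := (Real.exp_pos (-u)).le; linarith
  · rw [abs_of_nonpos h]; have := (Real.exp_pos u).le; linarith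

lemma exp_mul_gaussianPDFReal (m : ℝ) {v : ℝ≥0} (hv : v ≠ 0) (t y : ℝ) :
    exp (t * y) * gaussianPDFReal m v y
      = exp (t * m + t ^ 2 * v / 2) * gaussianPDFReal (m + t * v) v y := by
  have hv' : (v : ℝ) ≠ 0 := by exact_mod_cast hv
  simp only [gaussianPDFReal]
  rw [mul_left_comm, mul_left_comm (exp (t * m + t ^ 2 * v / 2)), ← exp_add, ← exp_add]
  congr 2
  field_simp
  ring

lemma integrable_exp_mul_gaussianReal (m : ℝ) (v : ℝ≥0) (t : ℝ) :
    Integrable (fun y => exp (t * y)) (gaussianReal m v) := by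
  by_cases hv : v = 0
  · subst hv; rw [gaussianReal_zero_var]; exact (integrable_const _).congr (MeasureTheory.ae_eq_dirac (fun y => exp (t*y))).symm
  · rw [gaussianReal_of_var_ne_zero _ hv, gaussianPDF_def]
    rw [integrable_withDensity_iff (measurable_gaussianPDFReal m v).ennreal_ofReal (ae_of_all _ fun x => ENNReal.ofReal_lt_top)]
    have : (fun y => exp (t * y) * (ENNReal.ofReal (gaussianPDFReal m v y)).toReal)
        = fun y => exp (t * m + t ^ 2 * v / 2) * gaussianPDFReal (m + t * v) v y := by
      funext y
      rw [ENNReal.toReal_ofReal (gaussianPDFReal_nonneg _ _ _), exp_mul_gaussianPDFReal m hv]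
    rw [this]
    exact (integrable_gaussianPDFReal _ _).const_mul _

lemma integral_exp_mul_gaussianReal (m : ℝ) (v : ℝ≥0) (t : ℝ) :
    ∫ y, exp (t * y) ∂(gaussianReal m v) = exp (t * m + t ^ 2 * v / 2) := by
  by_cases hv : v = 0
  · subst hv; rw [gaussianReal_zero_var, integral_dirac]; norm_num
  · rw [gaussianReal_of_var_ne_zero _ hv, gaussianPDF_def]
    have hd : (fun x => ENNReal.ofReal (gaussianPDFReal m v x))
        = fun x => ((gaussianPDFReal m v x).toNNReal : ℝ≥0∞) := rfl
    rw [hd, integral_withDensity_eq_integral_smul ((measurable_gaussianPDFReal m v).real_toNNReal)]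
    have : (fun y => ((gaussianPDFReal m v y).toNNReal : ℝ≥0) • exp (t * y))
        = fun y => exp (t * m + t ^ 2 * v / 2) * gaussianPDFReal (m + t * v) v y := by
      funext y
      rw [NNReal.smul_def, smul_eq_mul, Real.coe_toNNReal _ (gaussianPDFReal_nonneg _ _ _),
        mul_comm, exp_mul_gaussianPDFReal m hv]
    rw [this, integral_const_mul, integral_gaussianPDFReal_eq_one _ hv, mul_one]


section E

variable {E : Type*} [NormedAddCommGroup E] [NormedSpace ℝ E]
    [MeasurableSpace E] [BorelSpace E]
    (μ : Measure E) [IsProbabilityMeasure μ]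

/-- restated Gaussian hypothesis -/
def IsG (μ : Measure E) : Prop := ∀ L : E →L[ℝ] ℝ, ∃ (m : ℝ) (v : ℝ≥0), μ.map L = gaussianReal m v

lemma integrable_exp_clm (hμ : IsG μ) (T : E →L[ℝ] ℝ) :
    Integrable (fun x => exp (T x)) μ := by
  obtain ⟨m, v, h⟩ := hμ T
  have h1 := integrable_exp_mul_gaussianReal m v 1
  rw [← h, integrable_map_measure (by fun_prop : Continuous fun y : ℝ => rexp (1*y)).aestronglyMeasurable T.continuous.measurable.aemeasurable] at h1
  simpa [Function.comp_def] using h1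

lemma integral_exp_clm {T : E →L[ℝ] ℝ} {m : ℝ} {v : ℝ≥0}
    (h : μ.map T = gaussianReal m v) (t : ℝ) :
    ∫ x, exp (t * T x) ∂μ = exp (t * m + t ^ 2 * v / 2) := by
  rw [← integral_exp_mul_gaussianReal m v t, ← h,
    integral_map T.continuous.measurable.aemeasurable (by fun_prop : Continuous fun y : ℝ => rexp (t*y)).aestronglyMeasurable]

lemma key (hμ : IsG μ) (W S T : E →L[ℝ] ℝ) (w : E → ℝ)
    (hw : ∀ x, |w x| ≤ exp (W x) + exp (-W x))
    (hwm : AEStronglyMeasurable w μ) (t₀ : ℝ) :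
    Integrable (fun x => w x * T x * exp (S x + t₀ * T x)) μ ∧
      HasDerivAt (fun t => ∫ x, w x * exp (S x + t * T x) ∂μ)
        (∫ x, w x * T x * exp (S x + t₀ * T x) ∂μ) t₀ := by
  have hcomb : ∀ (a b : ℝ), Integrable (fun x => exp (a * W x + (b * T x + (S x + t₀ * T x)))) μ := by
    intro a b
    simpa [ContinuousLinearMap.add_apply, ContinuousLinearMap.coe_smul', Pi.smul_apply,
      smul_eq_mul] using integrable_exp_clm μ hμ (a • W + (b • T + (S + t₀ • T)))
  set bound : E → ℝ := fun x =>
    (exp (W x) + exp (-W x)) * ((exp (2 * T x) + exp (-(2 * T x))) * exp (S x + t₀ * T x))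
    with hbound_def
  have hbound_int : Integrable bound μ := by
    have : bound = fun x =>
        exp (1 * W x + (2 * T x + (S x + t₀ * T x)))
        + exp (1 * W x + (-2 * T x + (S x + t₀ * T x)))
        + (exp ((-1) * W x + (2 * T x + (S x + t₀ * T x)))
        + exp ((-1) * W x + (-2 * T x + (S x + t₀ * T x)))) := by
      funext x
      simp only [hbound_def, exp_add]
      rw [show (-2 : ℝ) * T x = -(2 * T x) by ring, show (-1 : ℝ) * W x = -(W x) by ring,
        show (1 : ℝ) * W x = W x by ring]
      simp only [exp_add, exp_neg]
      field_simp
    rw [this]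
    exact ((hcomb 1 2).add (hcomb 1 (-2))).add ((hcomb (-1) 2).add (hcomb (-1) (-2)))
  have hFmeas : ∀ t : ℝ, AEStronglyMeasurable (fun x => w x * exp (S x + t * T x)) μ := by
    intro t
    exact hwm.mul ((Real.continuous_exp.comp
      (S.continuous.add (continuous_const.mul T.continuous))).aestronglyMeasurable)
  have hwx : ∀ x, |w x| ≤ exp (W x) + exp (-W x) := hw
  have hF_int : Integrable (fun x => w x * exp (S x + t₀ * T x)) μ := by
    refine Integrable.mono' ((hcomb 1 0).add (hcomb (-1) 0)) (hFmeas t₀) (ae_of_all _ fun x => ?_)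
    have h1 : ‖w x * exp (S x + t₀ * T x)‖ = |w x| * exp (S x + t₀ * T x) := by
      rw [norm_mul, Real.norm_eq_abs, Real.norm_eq_abs, abs_of_pos (exp_pos _)]
    rw [h1]
    calc |w x| * exp (S x + t₀ * T x)
        ≤ (exp (W x) + exp (-W x)) * exp (S x + t₀ * T x) := by
          exact mul_le_mul_of_nonneg_right (hwx x) (exp_pos _).le
      _ = exp (1 * W x + (0 * T x + (S x + t₀ * T x)))
          + exp ((-1) * W x + (0 * T x + (S x + t₀ * T x))) := by
          simp only [exp_add, one_mul, zero_mul, neg_one_mul, exp_neg, zero_add]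
          ring
  have hF'_meas : AEStronglyMeasurable (fun x => w x * T x * exp (S x + t₀ * T x)) μ := by
    exact (hwm.mul T.continuous.aestronglyMeasurable).mul
      ((Real.continuous_exp.comp
        (S.continuous.add (continuous_const.mul T.continuous))).aestronglyMeasurable)
  have h_bound : ∀ᵐ x ∂μ, ∀ t ∈ Metric.ball t₀ 1,
      ‖w x * T x * exp (S x + t * T x)‖ ≤ bound x := by
    refine ae_of_all _ fun x t ht => ?_
    have hdist : |t - t₀| < 1 := by simpa [Real.dist_eq] using ht
    have h1 : ‖w x * T x * exp (S x + t * T x)‖ = |w x| * |T x| * exp (S x + t * T x) := by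
      rw [norm_mul, norm_mul, Real.norm_eq_abs, Real.norm_eq_abs, Real.norm_eq_abs,
        abs_of_pos (exp_pos _)]
    rw [h1]
    have h2 : exp (S x + t * T x) ≤ exp (S x + t₀ * T x) * exp |T x| := by
      rw [← exp_add, exp_le_exp]
      have : t * T x - t₀ * T x ≤ |T x| := by
        calc t * T x - t₀ * T x = (t - t₀) * T x := by ring
          _ ≤ |(t - t₀) * T x| := le_abs_self _
          _ = |t - t₀| * |T x| := abs_mul _ _
          _ ≤ 1 * |T x| := mul_le_mul_of_nonneg_right hdist.le (abs_nonneg _)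
          _ = |T x| := one_mul _
      linarith
    have h3 : |T x| * exp |T x| ≤ exp (2 * T x) + exp (-(2 * T x)) := by
      have ha : |T x| ≤ exp |T x| := by
        have := Real.add_one_le_exp |T x|
        have := abs_nonneg (T x)
        linarith
      calc |T x| * exp |T x| ≤ exp |T x| * exp |T x| :=
            mul_le_mul_of_nonneg_right ha (exp_pos _).le
        _ = exp (2 * |T x|) := by rw [← exp_add]; ring_nf
        _ = exp |2 * T x| := by rw [abs_mul]; norm_num
        _ ≤ exp (2 * T x) + exp (-(2 * T x)) := exp_abs_le _
    calc |w x| * |T x| * exp (S x + t * T x)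
        ≤ |w x| * |T x| * (exp (S x + t₀ * T x) * exp |T x|) := by
          refine mul_le_mul_of_nonneg_left h2 (by positivity)
      _ = |w x| * (|T x| * exp |T x|) * exp (S x + t₀ * T x) := by ring
      _ ≤ (exp (W x) + exp (-W x)) * (exp (2 * T x) + exp (-(2 * T x)))
            * exp (S x + t₀ * T x) := by
          refine mul_le_mul_of_nonneg_right ?_ (exp_pos _).le
          refine mul_le_mul (hwx x) h3 ?_ ?_
          · positivity
          · positivity
      _ = bound x := by rw [hbound_def]; ring
  have h_diff : ∀ᵐ x ∂μ, ∀ t ∈ Metric.ball t₀ 1,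
      HasDerivAt (fun t => w x * exp (S x + t * T x)) (w x * T x * exp (S x + t * T x)) t := by
    refine ae_of_all _ fun x t _ => ?_
    have h1 : HasDerivAt (fun t : ℝ => S x + t * T x) (T x) t := by
      simpa using ((hasDerivAt_id t).mul_const (T x)).const_add (S x)
    have h2 := (h1.exp).const_mul (w x)
    exact h2.congr_deriv (by ring)
  have := hasDerivAt_integral_of_dominated_loc_of_deriv_le (Metric.ball_mem_nhds t₀ one_pos)
    (Filter.Eventually.of_forall fun t => hFmeas t) hF_int hF'_meas h_bound hbound_int h_diff
  exact this


lemma hasDerivAt_gauss (m v t₀ : ℝ) :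
    HasDerivAt (fun t => exp (t * m + t ^ 2 * v / 2))
      (exp (t₀ * m + t₀ ^ 2 * v / 2) * (m + t₀ * v)) t₀ := by
  have h : HasDerivAt (fun t : ℝ => t * m + t ^ 2 * v / 2) (m + t₀ * v) t₀ := by
    have h1 := (hasDerivAt_id t₀).mul_const m
    have h2 := ((hasDerivAt_pow 2 t₀).mul_const v).div_const 2
    have := h1.add h2
    exact this.congr_deriv (by ring)
  exact h.exp

lemma first_moment (hμ : IsG μ) {T : E →L[ℝ] ℝ} {m : ℝ} {v : ℝ≥0}
    (h : μ.map T = gaussianReal m v) (t₀ : ℝ) :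
    Integrable (fun x => T x * exp (t₀ * T x)) μ ∧
      ∫ x, T x * exp (t₀ * T x) ∂μ = exp (t₀ * m + t₀ ^ 2 * v / 2) * (m + t₀ * v) := by
  have hkey := key μ hμ 0 0 T (fun _ => 1) (fun x => by simp)
    aestronglyMeasurable_const t₀
  simp only [ContinuousLinearMap.zero_apply, zero_add, one_mul] at hkey
  refine ⟨hkey.1, ?_⟩
  have hfun : (fun t => ∫ x, exp (t * T x) ∂μ)
      = fun t => exp (t * m + t ^ 2 * v / 2) := funext fun t => integral_exp_clm μ h t
  have hd2 := hasDerivAt_gauss m v t₀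
  rw [← hfun] at hd2
  exact hkey.2.unique hd2

lemma integrable_clm (hμ : IsG μ) (T : E →L[ℝ] ℝ) : Integrable (fun x => T x) μ := by
  obtain ⟨m, v, h⟩ := hμ T
  have := (first_moment μ hμ h 0).1
  simpa using this

lemma integral_clm (hμ : IsG μ) {T : E →L[ℝ] ℝ} {m : ℝ} {v : ℝ≥0}
    (h : μ.map T = gaussianReal m v) : ∫ x, T x ∂μ = m := by
  have := (first_moment μ hμ h 0).2
  simpa using this

lemma second_moment (hμ : IsG μ) {T : E →L[ℝ] ℝ} {m : ℝ} {v : ℝ≥0}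
    (h : μ.map T = gaussianReal m v) :
    Integrable (fun x => T x * T x) μ ∧ ∫ x, T x * T x ∂μ = m ^ 2 + v := by
  have hkey := key μ hμ T 0 T (fun x => T x) (fun x => abs_le_exp_add (T x))
    T.continuous.aestronglyMeasurable 0
  simp only [ContinuousLinearMap.zero_apply, zero_add, zero_mul, exp_zero, mul_one] at hkey
  refine ⟨hkey.1, ?_⟩
  have hfun : (fun t => ∫ x, T x * exp (t * T x) ∂μ)
      = fun t => exp (t * m + t ^ 2 * v / 2) * (m + t * v) :=
    funext fun t => (first_moment μ hμ h t).2
  have hd2 : HasDerivAt (fun t => exp (t * m + t ^ 2 * v / 2) * (m + t * v))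
      (m ^ 2 + v) 0 := by
    have h1 := hasDerivAt_gauss m v 0
    have h2 : HasDerivAt (fun t : ℝ => m + t * v) v 0 := by
      simpa using ((hasDerivAt_id (0:ℝ)).mul_const v).const_add m
    have := h1.mul h2
    exact this.congr_deriv (by simp; ring)
  rw [← hfun] at hd2
  exact hkey.2.unique hd2

lemma central_moment (hμ : IsG μ) {T : E →L[ℝ] ℝ} {m : ℝ} {v : ℝ≥0}
    (h : μ.map T = gaussianReal m v) :
    ∫ x, (T x - m) ^ 2 ∂μ = v := by
  have h2 := second_moment μ hμ h
  have h1i := integrable_clm μ hμ T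
  have h1 := integral_clm μ hμ h
  have hexp : (fun x => (T x - m) ^ 2)
      = fun x => T x * T x - (2 * m) * T x + m * m := by funext x; ring
  have hsub : Integrable (fun x => T x * T x - 2 * m * T x) μ :=
    h2.1.sub (h1i.const_mul (2 * m))
  rw [hexp, integral_add hsub (integrable_const _),
    integral_sub h2.1 (h1i.const_mul _), integral_const_mul, h2.2, h1,
    integral_const]
  simp only [measure_univ, ENNReal.toReal_one, smul_eq_mul, one_mul, probReal_univ, mul_one]
  ring

end E

end TiltAux

/-- A measure `μ` on a real normed space `E` is Gaussian if the pushforward of `μ` by every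
continuous linear functional `L : E → ℝ` is a one-dimensional Gaussian measure. -/
def IsGaussianMeasure {E : Type*} [NormedAddCommGroup E] [NormedSpace ℝ E]
    [MeasurableSpace E] (μ : Measure E) : Prop :=
  ∀ L : E →L[ℝ] ℝ, ∃ (m : ℝ) (v : ℝ≥0), μ.map L = gaussianReal m v

/-- Mean shift under exponential tilting of a Gaussian measure: for the tilted measure
`μ_λ = μ.tilted (λ • L)` and any continuous linear functional `φ`,
`∫ φ dμ_λ = ∫ φ dμ + λ * Cov_μ(L, φ)`. -/
theorem integral_tilted_gaussian_eq_add_cov {E : Type*} [NormedAddCommGroup E]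
    [NormedSpace ℝ E] [CompleteSpace E] [TopologicalSpace.SeparableSpace E]
    [MeasurableSpace E] [BorelSpace E]
    (μ : Measure E) [IsProbabilityMeasure μ] (hμ : IsGaussianMeasure μ)
    (L : E →L[ℝ] ℝ) (lam : ℝ) (φ : E →L[ℝ] ℝ) :
    ∫ x, φ x ∂(μ.tilted fun x => lam * L x) =
      ∫ x, φ x ∂μ +
        lam * ∫ x, (L x - ∫ y, L y ∂μ) * (φ x - ∫ y, φ y ∂μ) ∂μ := by
  have hG : TiltAux.IsG μ := hμ
  open TiltAux Real in
  set mX := ∫ y, L y ∂μ with hmX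
  set mY := ∫ y, φ y ∂μ with hmY
  set c := ∫ x, (L x - mX) * (φ x - mY) ∂μ with hc
  set VL := ∫ x, (L x - mX) ^ 2 ∂μ with hVL
  set Vφ := ∫ x, (φ x - mY) ^ 2 ∂μ with hVφ
  have hLi : Integrable (fun x => L x) μ := integrable_clm μ hG L
  have hφi : Integrable (fun x => φ x) μ := integrable_clm μ hG φ
  -- squares integrable
  have hsq : ∀ (T : E →L[ℝ] ℝ) (a : ℝ), Integrable (fun x => (T x - a) ^ 2) μ := by
    intro T a
    obtain ⟨m, v, h⟩ := hG T
    have h2 := (second_moment μ hG h).1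
    have heq : (fun x => (T x - a) ^ 2) = fun x => T x * T x - 2 * a * T x + a * a :=
      funext fun x => by ring
    rw [heq]
    exact ((h2.sub ((integrable_clm μ hG T).const_mul _)).add (integrable_const _))
  have hcross : Integrable (fun x => (L x - mX) * (φ x - mY)) μ := by
    have h3 := hsq (L + φ) (mX + mY)
    have heq : (fun x => (L x - mX) * (φ x - mY))
        = fun x => (((L + φ) x - (mX + mY)) ^ 2 - (L x - mX) ^ 2 - (φ x - mY) ^ 2) / 2 := by
      funext x
      simp only [ContinuousLinearMap.add_apply]
      ring
    rw [heq]
    exact ((h3.sub (hsq L mX)).sub (hsq φ mY)).div_const 2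
  -- closed form for the Laplace transform along the line lam•L + t•φ
  have hfun : (fun t => ∫ x, exp (lam * L x + t * φ x) ∂μ)
      = fun t => exp ((lam * mX + t * mY)
        + (lam ^ 2 * VL + 2 * lam * t * c + t ^ 2 * Vφ) / 2) := by
    funext t
    obtain ⟨m, v, hmap⟩ := hG (lam • L + t • φ)
    have happ : ∀ x, (lam • L + t • φ) x = lam * L x + t * φ x := fun x => by
      simp [ContinuousLinearMap.add_apply, ContinuousLinearMap.coe_smul', Pi.smul_apply,
        smul_eq_mul]
    have hm : m = lam * mX + t * mY := by
      have h1 := integral_clm μ hG hmap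
      rw [show (fun x => (lam • L + t • φ) x) = fun x => lam * L x + t * φ x from
        funext happ] at h1
      rw [integral_add (hLi.const_mul lam) (hφi.const_mul t), integral_const_mul,
        integral_const_mul] at h1
      exact h1.symm
    have hv : (v : ℝ) = lam ^ 2 * VL + 2 * lam * t * c + t ^ 2 * Vφ := by
      have hcm := central_moment μ hG hmap
      rw [show (fun x => ((lam • L + t • φ) x - m) ^ 2)
          = fun x => lam ^ 2 * (L x - mX) ^ 2 + ((2 * lam * t) * ((L x - mX) * (φ x - mY))
            + t ^ 2 * (φ x - mY) ^ 2) from funext fun x => by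
          rw [happ x, hm]; ring] at hcm
      have i1 : Integrable (fun x => 2 * lam * t * ((L x - mX) * (φ x - mY))
          + t ^ 2 * (φ x - mY) ^ 2) μ := (hcross.const_mul _).add ((hsq φ mY).const_mul _)
      rw [integral_add ((hsq L mX).const_mul _) i1,
        integral_add (hcross.const_mul _) ((hsq φ mY).const_mul _),
        integral_const_mul, integral_const_mul, integral_const_mul] at hcm
      rw [← hcm]
      ring
    have h1 := integral_exp_clm μ hmap 1
    rw [show (fun x => exp (1 * (lam • L + t • φ) x)) = fun x => exp (lam * L x + t * φ x)
      from funext fun x => by rw [one_mul, happ x]] at h1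
    rw [h1, hm, hv]
    congr 1
    ring
  -- derivative at 0 via dominated convergence
  have hkey := key μ hG 0 (lam • L) φ (fun _ => 1) (fun x => by simp)
    aestronglyMeasurable_const 0
  simp only [ContinuousLinearMap.zero_apply, one_mul, zero_mul, add_zero,
    ContinuousLinearMap.coe_smul', Pi.smul_apply, smul_eq_mul] at hkey
  -- derivative of the closed form at 0
  have hq : HasDerivAt (fun t : ℝ => (lam * mX + t * mY)
      + (lam ^ 2 * VL + 2 * lam * t * c + t ^ 2 * Vφ) / 2) (mY + lam * c) 0 := by
    have ha : HasDerivAt (fun t : ℝ => lam * mX + t * mY) mY 0 := by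
      simpa using ((hasDerivAt_id (0 : ℝ)).mul_const mY).const_add (lam * mX)
    have hb1 : HasDerivAt (fun t : ℝ => 2 * lam * t * c) (2 * lam * c) 0 := by
      have := ((hasDerivAt_id (0 : ℝ)).const_mul (2 * lam)).mul_const c
      exact this.congr_deriv (by ring)
    have hb2 : HasDerivAt (fun t : ℝ => t ^ 2 * Vφ) 0 0 := by
      have := (hasDerivAt_pow 2 (0 : ℝ)).mul_const Vφ
      exact this.congr_deriv (by ring)
    have hb : HasDerivAt (fun t : ℝ => lam ^ 2 * VL + 2 * lam * t * c + t ^ 2 * Vφ)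
        (2 * lam * c) 0 := by
      have := ((hb1.const_add (lam ^ 2 * VL)).add hb2)
      exact this.congr_deriv (by ring)
    have := ha.add (hb.div_const 2)
    exact this.congr_deriv (by ring)
  have hD2 : HasDerivAt (fun t => ∫ x, exp (lam * L x + t * φ x) ∂μ)
      ((∫ x, exp (lam * L x) ∂μ) * (mY + lam * c)) 0 := by
    rw [hfun]
    have hG0 : ∫ x, exp (lam * L x) ∂μ = exp ((lam * mX + 0 * mY)
        + (lam ^ 2 * VL + 2 * lam * 0 * c + 0 ^ 2 * Vφ) / 2) := by
      have := congrFun hfun 0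
      simpa using this
    rw [hG0]
    exact hq.exp
  have hUnique : ∫ x, φ x * exp (lam * L x) ∂μ
      = (∫ x, exp (lam * L x) ∂μ) * (mY + lam * c) := hkey.2.unique hD2
  -- conclude via the tilted integral formula
  have hG0pos : 0 < ∫ x, exp (lam * L x) ∂μ := by
    have := congrFun hfun 0
    simp only [zero_mul, add_zero] at this
    rw [this]
    exact exp_pos _
  rw [integral_tilted]
  simp only [smul_eq_mul]
  have heq : (fun x => exp (lam * L x) / (∫ x, exp (lam * L x) ∂μ) * φ x)
      = fun x => (φ x * exp (lam * L x)) / (∫ x, exp (lam * L x) ∂μ) := by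
    funext x
    ring
  rw [heq, integral_div, hUnique, mul_comm, mul_div_assoc,
    div_self hG0pos.ne', mul_one]
end

section
/- Let E be a separable real Banach space, let μ be a Gaussian probability measure on E, let L : E → ℝ be a continuous linear functional and λ ∈ ℝ, and let μ_λ = μ.tilted (fun x => λ * L x). Then the covariance structure is unchanged by the tilt: for all continuous linear functionals φ, ψ : E → ℝ, Cov_{μ_λ}(φ, ψ) = Cov_μ(φ, ψ), where Cov_ν(φ, ψ) := ∫ (φ x − ∫ φ dν)(ψ x − ∫ ψ dν) dν(x). -/
open MeasureTheory ProbabilityTheory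
open scoped NNReal

section Auxiliary

open Real
open scoped ENNReal

set_option linter.unusedSectionVars false

lemma abs_le_exp_add_exp_neg (u : ℝ) : |u| ≤ exp u + exp (-u) := by
  rcases le_or_gt 0 u with h | h
  · rw [abs_of_nonneg h]
    have := Real.add_one_le_exp u
    have := exp_pos (-u)
    linarith
  · rw [abs_of_neg h]
    have := Real.add_one_le_exp (-u)
    have := exp_pos u
    linarith

lemma gaussian_pdf_mul_exp (m : ℝ) {v : ℝ≥0} (hv : v ≠ 0) (x : ℝ) :
    gaussianPDFReal m v x * exp x = exp (m + v / 2) * gaussianPDFReal (m + v) v x := by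
  have hv' : (0:ℝ) < v := by positivity
  simp only [gaussianPDFReal]
  have hexp : -(x - m) ^ 2 / (2 * (v:ℝ)) + x = (m + v/2) + (-(x-(m+v))^2/(2*(v:ℝ))) := by
    field_simp
    ring
  rw [mul_assoc, ← exp_add, hexp, exp_add]
  ring

lemma integrable_exp_gaussianReal (m : ℝ) (v : ℝ≥0) :
    Integrable (fun x => exp x) (gaussianReal m v) := by
  by_cases hv : v = 0
  · rw [hv, gaussianReal_zero_var]
    constructor
    · exact (continuous_exp).aestronglyMeasurable
    · simp [HasFiniteIntegral, lintegral_dirac]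
  · rw [gaussianReal_of_var_ne_zero m hv, gaussianPDF_def]
    have h1 : (fun x => ENNReal.ofReal (gaussianPDFReal m v x))
        = fun x => ((gaussianPDFReal m v x).toNNReal : ℝ≥0∞) := by
      ext x; simp [ENNReal.ofReal]
    rw [h1, integrable_withDensity_iff_integrable_smul
      ((measurable_gaussianPDFReal m v).real_toNNReal)]
    have heq : (fun x => ((gaussianPDFReal m v x).toNNReal : ℝ≥0) • exp x)
        = fun x => exp (m + v / 2) * gaussianPDFReal (m + v) v x := by
      ext x
      rw [NNReal.smul_def, smul_eq_mul, Real.coe_toNNReal _ (gaussianPDFReal_nonneg m v x),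
        gaussian_pdf_mul_exp m hv x]
    rw [heq]
    exact (integrable_gaussianPDFReal (m + v) v).const_mul _

lemma integral_exp_gaussianReal (m : ℝ) (v : ℝ≥0) :
    ∫ x, exp x ∂(gaussianReal m v) = exp (m + v / 2) := by
  by_cases hv : v = 0
  · rw [hv, gaussianReal_zero_var, integral_dirac]
    simp
  · rw [gaussianReal_of_var_ne_zero m hv, gaussianPDF_def]
    have h1 : (fun x => ENNReal.ofReal (gaussianPDFReal m v x))
        = fun x => ((gaussianPDFReal m v x).toNNReal : ℝ≥0∞) := by
      ext x; simp [ENNReal.ofReal]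
    rw [h1, integral_withDensity_eq_integral_smul
      ((measurable_gaussianPDFReal m v).real_toNNReal)]
    have heq : ∀ x, ((gaussianPDFReal m v x).toNNReal : ℝ≥0) • exp x
        = exp (m + v / 2) * gaussianPDFReal (m + v) v x := by
      intro x
      rw [NNReal.smul_def, smul_eq_mul, Real.coe_toNNReal _ (gaussianPDFReal_nonneg m v x),
        gaussian_pdf_mul_exp m hv x]
    simp_rw [heq]
    rw [integral_const_mul, integral_gaussianPDFReal_eq_one (m + v) hv, mul_one]

section CLMAux

variable {E : Type*} [NormedAddCommGroup E] [NormedSpace ℝ E]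
  [MeasurableSpace E] [BorelSpace E]

lemma integrable_exp_clm' (μ : Measure E) [IsProbabilityMeasure μ] (hμ : IsGaussianMeasure μ) (S : E →L[ℝ] ℝ) :
    Integrable (fun x => exp (S x)) μ := by
  obtain ⟨m, v, h⟩ := hμ S
  have hS : AEMeasurable S μ := S.continuous.measurable.aemeasurable
  have h2 : Integrable (fun y => exp y) (μ.map S) := h ▸ integrable_exp_gaussianReal m v
  exact (integrable_map_measure continuous_exp.aestronglyMeasurable hS).mp h2

lemma integral_exp_clm' (μ : Measure E) {m : ℝ} {v : ℝ≥0} (S : E →L[ℝ] ℝ) (h : μ.map S = gaussianReal m v) :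
    ∫ x, exp (S x) ∂μ = exp (m + v / 2) := by
  have hS : AEMeasurable S μ := S.continuous.measurable.aemeasurable
  rw [← integral_map hS continuous_exp.aestronglyMeasurable, h, integral_exp_gaussianReal]

lemma integrable_mul_exp_clm' (μ : Measure E) [IsProbabilityMeasure μ] (hμ : IsGaussianMeasure μ) (T R : E →L[ℝ] ℝ) :
    Integrable (fun x => T x * exp (R x)) μ := by
  have hb : Integrable (fun x => exp ((T + R) x) + exp ((-T + R) x)) μ :=
    (integrable_exp_clm' μ hμ (T + R)).add (integrable_exp_clm' μ hμ (-T + R))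
  refine hb.mono ((T.continuous.mul (continuous_exp.comp R.continuous)).aestronglyMeasurable)
    (Filter.Eventually.of_forall fun x => ?_)
  simp only [ContinuousLinearMap.add_apply, ContinuousLinearMap.neg_apply, Real.norm_eq_abs]
  rw [abs_of_nonneg (by positivity : (0:ℝ) ≤ exp (T x + R x) + exp (-T x + R x)), abs_mul, abs_exp]
  calc |T x| * exp (R x) ≤ (exp (T x) + exp (-T x)) * exp (R x) :=
        mul_le_mul_of_nonneg_right (abs_le_exp_add_exp_neg _) (exp_pos _).le
    _ = exp (T x + R x) + exp (-T x + R x) := by rw [add_mul, ← exp_add, ← exp_add]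

lemma integrable_mul_mul_exp_clm' (μ : Measure E) [IsProbabilityMeasure μ] (hμ : IsGaussianMeasure μ) (T T' R : E →L[ℝ] ℝ) :
    Integrable (fun x => T x * T' x * exp (R x)) μ := by
  have hb : Integrable (fun x =>
      (exp ((T + T' + R) x) + exp ((T - T' + R) x)) +
      (exp ((-T + T' + R) x) + exp ((-T - T' + R) x))) μ :=
    (((integrable_exp_clm' μ hμ _).add (integrable_exp_clm' μ hμ _)).add
      ((integrable_exp_clm' μ hμ _).add (integrable_exp_clm' μ hμ _)))
  refine hb.mono (((T.continuous.mul T'.continuous).mul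
      (continuous_exp.comp R.continuous)).aestronglyMeasurable)
    (Filter.Eventually.of_forall fun x => ?_)
  simp only [ContinuousLinearMap.add_apply, ContinuousLinearMap.neg_apply,
    ContinuousLinearMap.sub_apply, Real.norm_eq_abs]
  rw [abs_of_nonneg (by positivity : (0:ℝ) ≤
    (exp (T x + T' x + R x) + exp (T x - T' x + R x)) +
      (exp (-T x + T' x + R x) + exp (-T x - T' x + R x))), abs_mul, abs_mul, abs_exp]
  calc |T x| * |T' x| * exp (R x)
      ≤ (exp (T x) + exp (-T x)) * (exp (T' x) + exp (-T' x)) * exp (R x) := by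
        apply mul_le_mul_of_nonneg_right _ (exp_pos _).le
        exact mul_le_mul (abs_le_exp_add_exp_neg _) (abs_le_exp_add_exp_neg _)
          (abs_nonneg _) (by positivity)
    _ = (exp (T x + T' x + R x) + exp (T x - T' x + R x)) +
        (exp (-T x + T' x + R x) + exp (-T x - T' x + R x)) := by
        simp only [add_mul, mul_add, ← exp_add]
        ring_nf

lemma hasDerivAt_integral_exp' (μ : Measure E)
    (g : E → ℝ) (hgc : Continuous g) (S T : E →L[ℝ] ℝ)
    (hgTi : ∀ R : E →L[ℝ] ℝ, Integrable (fun x => g x * T x * exp (R x)) μ)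
    (hgi : ∀ R : E →L[ℝ] ℝ, Integrable (fun x => g x * exp (R x)) μ)
    (t₀ : ℝ) :
    HasDerivAt (fun t => ∫ x, g x * exp (S x + t * T x) ∂μ)
      (∫ x, g x * T x * exp (S x + t₀ * T x) ∂μ) t₀ := by
  have key : ∀ a : ℝ, Integrable (fun x => g x * exp (S x + a * T x)) μ := by
    intro a
    simpa [ContinuousLinearMap.add_apply, ContinuousLinearMap.smul_apply, smul_eq_mul]
      using hgi (S + a • T)
  have keyT : ∀ a : ℝ, Integrable (fun x => |g x * T x| * exp (S x + a * T x)) μ := by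
    intro a
    have h := (hgTi (S + a • T)).norm
    simp only [ContinuousLinearMap.add_apply, ContinuousLinearMap.smul_apply, smul_eq_mul] at h
    refine h.congr (Filter.Eventually.of_forall fun x => ?_)
    simp only [Real.norm_eq_abs, abs_mul, abs_exp]
  have hmeas : ∀ t : ℝ, AEStronglyMeasurable (fun x => g x * exp (S x + t * T x)) μ := by
    intro t
    exact (hgc.mul ((S.continuous.add (T.continuous.const_smul t)).rexp)).aestronglyMeasurable
  have hmeas' : AEStronglyMeasurable (fun x => g x * T x * exp (S x + t₀ * T x)) μ :=
    ((hgc.mul T.continuous).mul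
      ((S.continuous.add (T.continuous.const_smul t₀)).rexp)).aestronglyMeasurable
  have := hasDerivAt_integral_of_dominated_loc_of_deriv_le (μ := μ)
    (F := fun t x => g x * exp (S x + t * T x))
    (F' := fun t x => g x * T x * exp (S x + t * T x))
    (bound := fun x => |g x * T x| * exp (S x + (t₀ + 1) * T x)
      + |g x * T x| * exp (S x + (t₀ - 1) * T x))
    (x₀ := t₀) (Metric.ball_mem_nhds t₀ one_pos)
    (Filter.Eventually.of_forall hmeas) (key t₀) hmeas' ?_ ((keyT _).add (keyT _)) ?_
  · exact this.2
  · refine Filter.Eventually.of_forall fun x => fun t ht => ?_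
    rw [Metric.mem_ball, Real.dist_eq, abs_sub_lt_iff] at ht
    rw [Real.norm_eq_abs, abs_mul, abs_mul, abs_exp, ← abs_mul]
    have hexp : exp (S x + t * T x) ≤
        exp (S x + (t₀ + 1) * T x) + exp (S x + (t₀ - 1) * T x) := by
      rcases le_or_gt 0 (T x) with h | h
      · have : t * T x ≤ (t₀ + 1) * T x := by nlinarith [ht.1, ht.2]
        have h1 : exp (S x + t * T x) ≤ exp (S x + (t₀ + 1) * T x) :=
          exp_le_exp.mpr (by linarith)
        linarith [exp_pos (S x + (t₀ - 1) * T x)]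
      · have : t * T x ≤ (t₀ - 1) * T x := by nlinarith [ht.1, ht.2]
        have h1 : exp (S x + t * T x) ≤ exp (S x + (t₀ - 1) * T x) :=
          exp_le_exp.mpr (by linarith)
        linarith [exp_pos (S x + (t₀ + 1) * T x)]
    calc |g x * T x| * exp (S x + t * T x)
        ≤ |g x * T x| * (exp (S x + (t₀ + 1) * T x) + exp (S x + (t₀ - 1) * T x)) :=
          mul_le_mul_of_nonneg_left hexp (abs_nonneg _)
      _ = _ := by ring
  · refine Filter.Eventually.of_forall fun x => fun t _ => ?_
    have h1 : HasDerivAt (fun t : ℝ => S x + t * T x) (T x) t := by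
      simpa using ((hasDerivAt_id t).mul_const (T x)).const_add (S x)
    have h2 := (h1.exp).const_mul (g x)
    refine h2.congr_deriv ?_
    ring

lemma map_smul_gaussian (μ : Measure E) {m : ℝ} {v : ℝ≥0} (S : E →L[ℝ] ℝ)
    (h : μ.map S = gaussianReal m v) (t : ℝ) :
    μ.map (t • S) = gaussianReal (t * m) (⟨t^2, sq_nonneg _⟩ * v) := by
  have hco : ⇑(t • S) = (t * ·) ∘ S := by ext x; simp
  rw [hco, ← Measure.map_map (measurable_id'.const_mul t) S.continuous.measurable, h,
    gaussianReal_map_const_mul]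
  rfl

lemma param_moments' (μ : Measure E) [IsProbabilityMeasure μ] (hμ : IsGaussianMeasure μ) (S : E →L[ℝ] ℝ) {m : ℝ} {v : ℝ≥0}
    (h : μ.map S = gaussianReal m v) :
    (∫ x, S x ∂μ = m) ∧ (∫ x, S x * S x ∂μ = m ^ 2 + v) := by
  have hF : ∀ t : ℝ, ∫ x, exp ((0 : E →L[ℝ] ℝ) x + t * S x) ∂μ
      = exp (t * m + t ^ 2 * (v : ℝ) / 2) := by
    intro t
    have h2 := integral_exp_clm' μ (t • S) (map_smul_gaussian μ S h t)
    simp only [ContinuousLinearMap.smul_apply, smul_eq_mul] at h2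
    simp only [ContinuousLinearMap.zero_apply, zero_add]
    rw [h2]
    norm_cast
  have hG : ∀ t : ℝ, HasDerivAt (fun t : ℝ => exp (t * m + t ^ 2 * (v : ℝ) / 2))
      (((m : ℝ) + t * v) * exp (t * m + t ^ 2 * (v : ℝ) / 2)) t := by
    intro t
    have h1 : HasDerivAt (fun t : ℝ => t * m) m t := hasDerivAt_mul_const m
    have h2 : HasDerivAt (fun s : ℝ => s ^ 2 * ((v : ℝ) / 2)) (t * v) t := by
      have h' := (hasDerivAt_pow 2 t).mul_const ((v : ℝ) / 2)
      refine h'.congr_deriv ?_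
      push_cast
      ring
    have h2' : HasDerivAt (fun s : ℝ => s ^ 2 * (v : ℝ) / 2) (t * v) t := by
      have : (fun s : ℝ => s ^ 2 * ((v : ℝ) / 2)) = fun s : ℝ => s ^ 2 * (v : ℝ) / 2 := by
        funext s; ring
      rwa [this] at h2
    have := ((h1.add h2').exp)
    refine this.congr_deriv ?_
    simp only [Pi.add_apply]
    ring
  have hD1 : ∀ t : ℝ, HasDerivAt (fun t : ℝ => ∫ x, exp ((0 : E →L[ℝ] ℝ) x + t * S x) ∂μ)
      (∫ x, S x * exp ((0 : E →L[ℝ] ℝ) x + t * S x) ∂μ) t := by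
    intro t
    have := hasDerivAt_integral_exp' μ (fun _ => 1) continuous_const 0 S
      (fun R => by simpa using integrable_mul_exp_clm' μ hμ S R)
      (fun R => by simpa using integrable_exp_clm' μ hμ R) t
    simpa using this
  have I1 : ∀ t : ℝ, ∫ x, S x * exp ((0 : E →L[ℝ] ℝ) x + t * S x) ∂μ
      = ((m : ℝ) + t * v) * exp (t * m + t ^ 2 * (v : ℝ) / 2) := by
    intro t
    have hd := hD1 t
    rw [funext hF] at hd
    exact hd.unique (hG t)
  have hmean : ∫ x, S x ∂μ = m := by
    have := I1 0
    simpa using this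
  refine ⟨hmean, ?_⟩
  have hD2 : HasDerivAt (fun t : ℝ => ∫ x, S x * exp ((0 : E →L[ℝ] ℝ) x + t * S x) ∂μ)
      (∫ x, S x * S x * exp ((0 : E →L[ℝ] ℝ) x + 0 * S x) ∂μ) 0 :=
    hasDerivAt_integral_exp' μ S S.continuous 0 S
      (fun R => integrable_mul_mul_exp_clm' μ hμ S S R)
      (fun R => integrable_mul_exp_clm' μ hμ S R) 0
  rw [funext I1] at hD2
  have hG2 : HasDerivAt
      (fun t : ℝ => ((m : ℝ) + t * v) * exp (t * m + t ^ 2 * (v : ℝ) / 2))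
      ((v : ℝ) + m ^ 2) 0 := by
    have hc : HasDerivAt (fun t : ℝ => (m : ℝ) + t * v) (v : ℝ) 0 :=
      (hasDerivAt_mul_const (v : ℝ)).const_add m
    have := hc.mul (hG 0)
    refine this.congr_deriv ?_
    simp
    ring
  have h9 := hD2.unique hG2
  have h0 : (∫ x, S x * S x ∂μ) = (v : ℝ) + m ^ 2 := by simpa using h9
  linarith

lemma integrable_clm' (μ : Measure E) [IsProbabilityMeasure μ] (hμ : IsGaussianMeasure μ) (T : E →L[ℝ] ℝ) :
    Integrable (fun x => T x) μ := by
  simpa using integrable_mul_exp_clm' μ hμ T 0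

lemma integrable_clm_mul' (μ : Measure E) [IsProbabilityMeasure μ] (hμ : IsGaussianMeasure μ) (T T' : E →L[ℝ] ℝ) :
    Integrable (fun x => T x * T' x) μ := by
  simpa using integrable_mul_mul_exp_clm' μ hμ T T' 0

lemma integral_exp_eq' (μ : Measure E) [IsProbabilityMeasure μ] (hμ : IsGaussianMeasure μ) (S : E →L[ℝ] ℝ) :
    ∫ x, exp (S x) ∂μ
      = exp ((∫ x, S x ∂μ) + ((∫ x, S x * S x ∂μ) - (∫ x, S x ∂μ) ^ 2) / 2) := by
  obtain ⟨m, v, h⟩ := hμ S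
  obtain ⟨h1, h2⟩ := param_moments' μ hμ S h
  rw [integral_exp_clm' μ S h, h1, h2]
  congr 1
  ring

lemma tilted_moments' (μ : Measure E) [IsProbabilityMeasure μ] (hμ : IsGaussianMeasure μ) (S₀ T : E →L[ℝ] ℝ)
    (m0 mT q00 q0T qTT : ℝ)
    (hm0 : ∫ x, S₀ x ∂μ = m0) (hmT : ∫ x, T x ∂μ = mT)
    (hq00 : ∫ x, S₀ x * S₀ x ∂μ = q00) (hq0T : ∫ x, S₀ x * T x ∂μ = q0T)
    (hqTT : ∫ x, T x * T x ∂μ = qTT) :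
    (∫ x, T x * exp (S₀ x) ∂μ)
        = (mT + (q0T - m0 * mT)) * ∫ x, exp (S₀ x) ∂μ
      ∧ (∫ x, T x * T x * exp (S₀ x) ∂μ)
        = ((qTT - mT ^ 2) + (mT + (q0T - m0 * mT)) ^ 2) * ∫ x, exp (S₀ x) ∂μ := by
  set α : ℝ := m0 + (q00 - m0 ^ 2) / 2 with hα
  set β : ℝ := mT + (q0T - m0 * mT) with hβ
  set γ : ℝ := qTT - mT ^ 2 with hγ
  have hF : ∀ t : ℝ, ∫ x, exp (S₀ x + t * T x) ∂μ = exp (α + β * t + γ * t ^ 2 / 2) := by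
    intro t
    have e1 := integral_exp_eq' μ hμ (S₀ + t • T)
    simp only [ContinuousLinearMap.add_apply, ContinuousLinearMap.smul_apply,
      smul_eq_mul] at e1
    have hM : ∫ x, S₀ x + t * T x ∂μ = m0 + t * mT := by
      rw [integral_add (integrable_clm' μ hμ S₀) ((integrable_clm' μ hμ T).const_mul t),
        integral_const_mul, hm0, hmT]
    have hQ : ∫ x, (S₀ x + t * T x) * (S₀ x + t * T x) ∂μ
        = q00 + 2 * t * q0T + t ^ 2 * qTT := by
      rw [show (fun x => (S₀ x + t * T x) * (S₀ x + t * T x))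
          = fun x => S₀ x * S₀ x + ((2 * t) * (S₀ x * T x) + t ^ 2 * (T x * T x)) from
        funext fun x => by ring]
      have i1 : Integrable (fun x => 2 * t * (S₀ x * T x)) μ :=
        (integrable_clm_mul' μ hμ S₀ T).const_mul (2 * t)
      have i2 : Integrable (fun x => t ^ 2 * (T x * T x)) μ :=
        (integrable_clm_mul' μ hμ T T).const_mul (t ^ 2)
      have i12 : Integrable (fun x => 2 * t * (S₀ x * T x) + t ^ 2 * (T x * T x)) μ := i1.add i2
      rw [integral_add (integrable_clm_mul' μ hμ S₀ S₀) i12, integral_add i1 i2,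
        integral_const_mul, integral_const_mul, hq00, hq0T, hqTT]
      ring
    rw [e1, hM, hQ]
    congr 1
    ring
  have hZ0 : ∫ x, exp (S₀ x) ∂μ = exp α := by
    have := hF 0
    simpa using this
  have hG : ∀ t : ℝ, HasDerivAt (fun t : ℝ => exp (α + β * t + γ * t ^ 2 / 2))
      ((β + γ * t) * exp (α + β * t + γ * t ^ 2 / 2)) t := by
    intro t
    have h1 : HasDerivAt (fun t : ℝ => α + β * t) β t := by
      simpa using ((hasDerivAt_id t).const_mul β).const_add α
    have h2 : HasDerivAt (fun s : ℝ => γ * s ^ 2 / 2) (γ * t) t := by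
      have h'' := ((hasDerivAt_pow 2 t).const_mul γ).div_const 2
      refine h''.congr_deriv ?_
      push_cast
      ring
    have h3 := ((h1.add h2).exp)
    refine h3.congr_deriv ?_
    simp only [Pi.add_apply]
    ring
  have hD1 : ∀ t : ℝ, HasDerivAt (fun t : ℝ => ∫ x, exp (S₀ x + t * T x) ∂μ)
      (∫ x, T x * exp (S₀ x + t * T x) ∂μ) t := by
    intro t
    have := hasDerivAt_integral_exp' μ (fun _ => 1) continuous_const S₀ T
      (fun R => by simpa using integrable_mul_exp_clm' μ hμ T R)
      (fun R => by simpa using integrable_exp_clm' μ hμ R) t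
    simpa using this
  have I1 : ∀ t : ℝ, ∫ x, T x * exp (S₀ x + t * T x) ∂μ
      = (β + γ * t) * exp (α + β * t + γ * t ^ 2 / 2) := by
    intro t
    have hd := hD1 t
    rw [funext hF] at hd
    exact hd.unique (hG t)
  have hA : ∫ x, T x * exp (S₀ x) ∂μ = β * exp α := by
    have := I1 0
    simpa using this
  have hD2 : HasDerivAt (fun t : ℝ => ∫ x, T x * exp (S₀ x + t * T x) ∂μ)
      (∫ x, T x * T x * exp (S₀ x + 0 * T x) ∂μ) 0 :=
    hasDerivAt_integral_exp' μ T T.continuous S₀ T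
      (fun R => integrable_mul_mul_exp_clm' μ hμ T T R)
      (fun R => integrable_mul_exp_clm' μ hμ T R) 0
  rw [funext I1] at hD2
  have hG2 : HasDerivAt
      (fun t : ℝ => (β + γ * t) * exp (α + β * t + γ * t ^ 2 / 2))
      ((γ + β ^ 2) * exp α) 0 := by
    have hc : HasDerivAt (fun t : ℝ => β + γ * t) γ 0 := by
      simpa using ((hasDerivAt_id (0:ℝ)).const_mul γ).const_add β
    have := hc.mul (hG 0)
    refine this.congr_deriv ?_
    simp
    ring
  have hC : ∫ x, T x * T x * exp (S₀ x) ∂μ = (γ + β ^ 2) * exp α := by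
    have h9 := hD2.unique hG2
    simpa using h9
  rw [hA, hC, hZ0]
  constructor <;> ring

end CLMAux

/-- The covariance structure of a Gaussian measure is unchanged by exponential tilting:
for `μ_λ = μ.tilted (λ • L)` and all continuous linear functionals `φ, ψ`,
`Cov_{μ_λ}(φ, ψ) = Cov_μ(φ, ψ)`. -/
theorem cov_tilted_gaussian_eq {E : Type*} [NormedAddCommGroup E]
    [NormedSpace ℝ E] [CompleteSpace E] [TopologicalSpace.SeparableSpace E]
    [MeasurableSpace E] [BorelSpace E]
    (μ : Measure E) [IsProbabilityMeasure μ] (hμ : IsGaussianMeasure μ)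
    (L : E →L[ℝ] ℝ) (lam : ℝ) (φ ψ : E →L[ℝ] ℝ) :
    (∫ x, (φ x - ∫ y, φ y ∂(μ.tilted fun z => lam * L z)) *
        (ψ x - ∫ y, ψ y ∂(μ.tilted fun z => lam * L z)) ∂(μ.tilted fun z => lam * L z)) =
      ∫ x, (φ x - ∫ y, φ y ∂μ) * (ψ x - ∫ y, ψ y ∂μ) ∂μ := by
  set S₀ : E →L[ℝ] ℝ := lam • L with hS₀
  have hfun : (fun z => lam * L z) = fun z => S₀ z := by
    funext z; simp [hS₀]
  rw [hfun]
  -- names for the moments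
  set m0 : ℝ := ∫ x, S₀ x ∂μ with hm0
  set mφ : ℝ := ∫ x, φ x ∂μ with hmφ
  set mψ : ℝ := ∫ x, ψ x ∂μ with hmψ
  set q00 : ℝ := ∫ x, S₀ x * S₀ x ∂μ with hq00
  set q0φ : ℝ := ∫ x, S₀ x * φ x ∂μ with hq0φ
  set q0ψ : ℝ := ∫ x, S₀ x * ψ x ∂μ with hq0ψ
  set qφφ : ℝ := ∫ x, φ x * φ x ∂μ with hqφφ
  set qψψ : ℝ := ∫ x, ψ x * ψ x ∂μ with hqψψ
  set qφψ : ℝ := ∫ x, φ x * ψ x ∂μ with hqφψ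
  set Z : ℝ := ∫ x, exp (S₀ x) ∂μ with hZ
  have hexp : Integrable (fun x => exp (S₀ x)) μ := integrable_exp_clm' μ hμ S₀
  haveI : NeZero μ := ⟨IsProbabilityMeasure.ne_zero μ⟩
  have hZpos : 0 < Z := integral_exp_pos hexp
  set pφ : ℝ := mφ + (q0φ - m0 * mφ) with hpφ
  set pψ : ℝ := mψ + (q0ψ - m0 * mψ) with hpψ
  obtain ⟨hAφ, hCφ⟩ := tilted_moments' μ hμ S₀ φ m0 mφ q00 q0φ qφφ rfl rfl rfl rfl rfl
  obtain ⟨hAψ, hCψ⟩ := tilted_moments' μ hμ S₀ ψ m0 mψ q00 q0ψ qψψ rfl rfl rfl rfl rfl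
  -- moments of φ + ψ
  have hmS : ∫ x, (φ + ψ) x ∂μ = mφ + mψ := by
    simp only [ContinuousLinearMap.add_apply]
    rw [integral_add (integrable_clm' μ hμ φ) (integrable_clm' μ hμ ψ)]
  have hq0S : ∫ x, S₀ x * (φ + ψ) x ∂μ = q0φ + q0ψ := by
    simp only [ContinuousLinearMap.add_apply]
    rw [show (fun x => S₀ x * (φ x + ψ x)) = fun x => S₀ x * φ x + S₀ x * ψ x from
      funext fun x => by ring]
    rw [integral_add (integrable_clm_mul' μ hμ S₀ φ) (integrable_clm_mul' μ hμ S₀ ψ)]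
  have hqSS : ∫ x, (φ + ψ) x * (φ + ψ) x ∂μ = qφφ + (2 * qφψ + qψψ) := by
    simp only [ContinuousLinearMap.add_apply]
    rw [show (fun x => (φ x + ψ x) * (φ x + ψ x))
        = fun x => φ x * φ x + (2 * (φ x * ψ x) + ψ x * ψ x) from funext fun x => by ring]
    have i1 : Integrable (fun x => 2 * (φ x * ψ x)) μ :=
      (integrable_clm_mul' μ hμ φ ψ).const_mul 2
    have i2 : Integrable (fun x => 2 * (φ x * ψ x) + ψ x * ψ x) μ :=
      i1.add (integrable_clm_mul' μ hμ ψ ψ)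
    rw [integral_add (integrable_clm_mul' μ hμ φ φ) i2,
      integral_add i1 (integrable_clm_mul' μ hμ ψ ψ), integral_const_mul]
  obtain ⟨hAS, hCS⟩ := tilted_moments' μ hμ S₀ (φ + ψ) m0 (mφ + mψ) q00 (q0φ + q0ψ)
    (qφφ + (2 * qφψ + qψψ)) rfl hmS rfl hq0S hqSS
  -- expansion of the (φ+ψ) second tilted moment
  have hexpand : ∫ x, (φ + ψ) x * (φ + ψ) x * exp (S₀ x) ∂μ
      = (∫ x, φ x * φ x * exp (S₀ x) ∂μ)
        + (2 * (∫ x, φ x * ψ x * exp (S₀ x) ∂μ) + ∫ x, ψ x * ψ x * exp (S₀ x) ∂μ) := by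
    simp only [ContinuousLinearMap.add_apply]
    rw [show (fun x => (φ x + ψ x) * (φ x + ψ x) * exp (S₀ x))
        = fun x => φ x * φ x * exp (S₀ x)
          + (2 * (φ x * ψ x * exp (S₀ x)) + ψ x * ψ x * exp (S₀ x)) from
      funext fun x => by ring]
    have i1 : Integrable (fun x => 2 * (φ x * ψ x * exp (S₀ x))) μ :=
      (integrable_mul_mul_exp_clm' μ hμ φ ψ S₀).const_mul 2
    have i2 : Integrable (fun x => 2 * (φ x * ψ x * exp (S₀ x)) + ψ x * ψ x * exp (S₀ x)) μ :=
      i1.add (integrable_mul_mul_exp_clm' μ hμ ψ ψ S₀)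
    rw [integral_add (integrable_mul_mul_exp_clm' μ hμ φ φ S₀) i2,
      integral_add i1 (integrable_mul_mul_exp_clm' μ hμ ψ ψ S₀), integral_const_mul]
  have hB : ∫ x, φ x * ψ x * exp (S₀ x) ∂μ = (qφψ - mφ * mψ + pφ * pψ) * Z := by
    linear_combination (hCS - hexpand - hCφ - hCψ) / 2
  -- the tilted means
  have ha : ∫ y, φ y ∂(μ.tilted fun z => S₀ z) = pφ := by
    rw [integral_tilted]
    simp only [smul_eq_mul, ← hZ]
    rw [show (fun x => exp (S₀ x) / Z * φ x) = fun x => (φ x * exp (S₀ x)) * Z⁻¹ from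
      funext fun x => by ring]
    rw [integral_mul_const, hAφ]
    field_simp
    rw [hpφ, ← hZ]
    ring
  have hb : ∫ y, ψ y ∂(μ.tilted fun z => S₀ z) = pψ := by
    rw [integral_tilted]
    simp only [smul_eq_mul, ← hZ]
    rw [show (fun x => exp (S₀ x) / Z * ψ x) = fun x => (ψ x * exp (S₀ x)) * Z⁻¹ from
      funext fun x => by ring]
    rw [integral_mul_const, hAψ]
    field_simp
    rw [hpψ, ← hZ]
    ring
  rw [ha, hb, integral_tilted]
  simp only [smul_eq_mul, ← hZ]
  rw [show (fun x => exp (S₀ x) / Z * ((φ x - pφ) * (ψ x - pψ)))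
      = fun x => ((φ x - pφ) * (ψ x - pψ) * exp (S₀ x)) * Z⁻¹ from
    funext fun x => by ring]
  rw [integral_mul_const]
  have hInner : ∫ x, (φ x - pφ) * (ψ x - pψ) * exp (S₀ x) ∂μ = (qφψ - mφ * mψ) * Z := by
    rw [show (fun x => (φ x - pφ) * (ψ x - pψ) * exp (S₀ x))
        = fun x => (φ x * ψ x * exp (S₀ x) - pφ * (ψ x * exp (S₀ x)))
          + (pφ * pψ * exp (S₀ x) - pψ * (φ x * exp (S₀ x))) from
      funext fun x => by ring]
    have i1 : Integrable (fun x => φ x * ψ x * exp (S₀ x) - pφ * (ψ x * exp (S₀ x))) μ :=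
      (integrable_mul_mul_exp_clm' μ hμ φ ψ S₀).sub
        ((integrable_mul_exp_clm' μ hμ ψ S₀).const_mul pφ)
    have i2 : Integrable (fun x => pφ * pψ * exp (S₀ x) - pψ * (φ x * exp (S₀ x))) μ :=
      (hexp.const_mul (pφ * pψ)).sub ((integrable_mul_exp_clm' μ hμ φ S₀).const_mul pψ)
    rw [integral_add i1 i2,
      integral_sub (integrable_mul_mul_exp_clm' μ hμ φ ψ S₀)
        ((integrable_mul_exp_clm' μ hμ ψ S₀).const_mul pφ),
      integral_sub (hexp.const_mul (pφ * pψ)) ((integrable_mul_exp_clm' μ hμ φ S₀).const_mul pψ),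
      integral_const_mul, integral_const_mul, integral_const_mul, hB, hAφ, hAψ, ← hZ]
    ring
  rw [hInner]
  have hRHS : ∫ x, (φ x - mφ) * (ψ x - mψ) ∂μ = qφψ - mφ * mψ := by
    rw [show (fun x => (φ x - mφ) * (ψ x - mψ))
        = fun x => (φ x * ψ x - mφ * ψ x) + (mφ * mψ - mψ * φ x) from
      funext fun x => by ring]
    have i1 : Integrable (fun x => φ x * ψ x - mφ * ψ x) μ :=
      (integrable_clm_mul' μ hμ φ ψ).sub ((integrable_clm' μ hμ ψ).const_mul mφ)
    have i2 : Integrable (fun x => mφ * mψ - mψ * φ x) μ :=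
      (integrable_const (mφ * mψ)).sub ((integrable_clm' μ hμ φ).const_mul mψ)
    rw [integral_add i1 i2,
      integral_sub (integrable_clm_mul' μ hμ φ ψ) ((integrable_clm' μ hμ ψ).const_mul mφ),
      integral_sub (integrable_const (mφ * mψ)) ((integrable_clm' μ hμ φ).const_mul mψ),
      integral_const_mul, integral_const_mul, integral_const_mul]
    simp only [integral_const, measure_univ, ENNReal.toReal_one, probReal_univ, smul_eq_mul, one_mul]
    ring
  rw [hRHS]
  field_simp

end Auxiliary
end

section
/- Let X be a nonempty type, let f, m, s : X → ℝ with s nonnegative, and let b ≥ 0. Suppose the uniform confidence bound |f x − m x| ≤ b * s x holds for all x ∈ X, and suppose x_t ∈ X maximizes the upper confidence bound, i.e. m x + b * s x ≤ m x_t + b * s x_t for all x ∈ X. Then the instantaneous regret at x_t is at most twice the confidence width: for every x⋆ ∈ X, f x⋆ − f x_t ≤ 2 * b * s x_t. -/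
/-- One-step regret inequality for UCB selection: if `|f x - m x| ≤ b * s x` uniformly and
`x_t` maximizes the upper confidence bound `m x + b * s x`, then for every `x⋆` the
instantaneous regret satisfies `f x⋆ - f x_t ≤ 2 * b * s x_t`. -/
theorem ucb_one_step_regret {X : Type*} [Nonempty X] (f m s : X → ℝ)
    (hs : ∀ x, 0 ≤ s x) (b : ℝ) (hb : 0 ≤ b)
    (hconf : ∀ x, |f x - m x| ≤ b * s x) (xt : X)
    (hmax : ∀ x, m x + b * s x ≤ m xt + b * s xt) (xstar : X) :
    f xstar - f xt ≤ 2 * b * s xt := by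
  have h1 := abs_le.mp (hconf xstar)
  have h2 := abs_le.mp (hconf xt)
  have h3 := hmax xstar
  linarith
end

section
/- Let T ∈ ℕ, let σ > 0, and let K be a real symmetric positive semidefinite T×T matrix. For each t ∈ Fin T, let K_t be the leading principal t×t submatrix of K (on the indices i < t), let k_t ∈ ℝ^t be the vector with entries (K i t) for i < t, and define the predictive variance s_t² := K t t − k_tᵀ (K_t + σ² I_t)⁻¹ k_t. Then the information gain telescopes: Matrix.det (1 + σ⁻² • K) = ∏_{t=0}^{T−1} (1 + σ⁻² * s_t²); equivalently, (1/2) * Real.log (Matrix.det (1 + σ⁻² • K)) = (1/2) * ∑_{t} Real.log (1 + σ⁻² * s_t²). -/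
open Matrix


noncomputable def schurc {T : ℕ} (N : Matrix (Fin T) (Fin T) ℝ) (t : Fin T) : ℝ :=
  N t t - (fun i : Fin t => N (Fin.castLE t.isLt.le i) t) ⬝ᵥ
    (N.submatrix (Fin.castLE t.isLt.le) (Fin.castLE t.isLt.le))⁻¹.mulVec
    (fun i : Fin t => N (Fin.castLE t.isLt.le i) t)

lemma det_succ_schur {n : ℕ} (M : Matrix (Fin (n+1)) (Fin (n+1)) ℝ)
    (hA : IsUnit (M.submatrix Fin.castSucc Fin.castSucc)) :
    M.det = (M.submatrix Fin.castSucc Fin.castSucc).det *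
      (M (Fin.last n) (Fin.last n) -
        (fun j : Fin n => M (Fin.last n) j.castSucc) ⬝ᵥ
          (M.submatrix Fin.castSucc Fin.castSucc)⁻¹.mulVec
          (fun i : Fin n => M i.castSucc (Fin.last n))) := by
  set A := M.submatrix Fin.castSucc Fin.castSucc with hAdef
  have : Invertible A := hA.invertible
  have hM : M.submatrix finSumFinEquiv finSumFinEquiv =
      fromBlocks A (Matrix.of fun i (_ : Fin 1) => M i.castSucc (Fin.last n))
        (Matrix.of fun (_ : Fin 1) j => M (Fin.last n) j.castSucc)
        (Matrix.of fun _ _ => M (Fin.last n) (Fin.last n)) := by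
    ext i j
    cases i <;> cases j <;>
      simp [fromBlocks, finSumFinEquiv, Fin.castSucc, Fin.last, Fin.ext_iff, hAdef] <;>
      congr 1 <;> exact Fin.ext (by simp [Fin.castAdd, Fin.natAdd, Fin.last])
  have h1 : M.det = (M.submatrix finSumFinEquiv finSumFinEquiv).det :=
    (det_submatrix_equiv_self _ _).symm
  rw [h1, hM, det_fromBlocks₁₁, invOf_eq_nonsing_inv]
  congr 1
  rw [det_fin_one]
  simp [Matrix.mul_apply, Matrix.mulVec, dotProduct, Finset.mul_sum, mul_comm]
  rw [Finset.sum_comm]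
  exact Finset.sum_congr rfl fun i _ => Finset.sum_congr rfl fun x _ => by ring

lemma lead_step {T : ℕ} (N : Matrix (Fin T) (Fin T) ℝ) (hs : N.IsSymm)
    {t : ℕ} (h : t + 1 ≤ T)
    (hA : ((N.submatrix (Fin.castLE (Nat.le_of_succ_le h))
        (Fin.castLE (Nat.le_of_succ_le h)))).PosDef) :
    (N.submatrix (Fin.castLE h) (Fin.castLE h)).det =
      (N.submatrix (Fin.castLE (Nat.le_of_succ_le h))
        (Fin.castLE (Nat.le_of_succ_le h))).det * schurc N ⟨t, h⟩ := by
  set M := N.submatrix (Fin.castLE h) (Fin.castLE h) with hMdef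
  have hsub : M.submatrix Fin.castSucc Fin.castSucc =
      N.submatrix (Fin.castLE (Nat.le_of_succ_le h)) (Fin.castLE (Nat.le_of_succ_le h)) := by
    ext i j; simp [hMdef, Matrix.submatrix_apply]
  have hA' : IsUnit (M.submatrix Fin.castSucc Fin.castSucc) := by
    rw [hsub]; exact hA.isUnit
  rw [det_succ_schur M hA', hsub]
  congr 1
  have hll : Fin.castLE h (Fin.last t) = (⟨t, h⟩ : Fin T) := rfl
  have hcc : ∀ i : Fin t, Fin.castLE h i.castSucc =
      Fin.castLE (Nat.le_of_succ_le h) i := fun i => rfl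
  unfold schurc
  have hr : (fun j : Fin t => N (Fin.castLE h (Fin.last t))
      (Fin.castLE (Nat.le_of_succ_le h) j)) =
      fun i : Fin t => N (Fin.castLE (Nat.le_of_succ_le h) i) (⟨t, h⟩ : Fin T) :=
    funext fun j => congrFun (congrFun hs _) _
  congr 1
  congr 1

lemma lead_det {T : ℕ} (N : Matrix (Fin T) (Fin T) ℝ) (hs : N.IsSymm)
    (hPD : ∀ (t : ℕ) (h : t ≤ T),
      (N.submatrix (Fin.castLE h) (Fin.castLE h)).PosDef) :
    ∀ (t : ℕ) (h : t ≤ T),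
      (N.submatrix (Fin.castLE h) (Fin.castLE h)).det =
        ∏ i : Fin t, schurc N (Fin.castLE h i) := by
  intro t
  induction t with
  | zero => intro h; simp [Matrix.det_isEmpty]
  | succ t ih =>
    intro h
    rw [lead_step N hs h (hPD t (Nat.le_of_succ_le h)), ih (Nat.le_of_succ_le h),
      Fin.prod_univ_castSucc]
    rfl

lemma schurc_pos {T : ℕ} (N : Matrix (Fin T) (Fin T) ℝ) (hs : N.IsSymm)
    (hPD : ∀ (t : ℕ) (h : t ≤ T),
      (N.submatrix (Fin.castLE h) (Fin.castLE h)).PosDef)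
    (u : Fin T) : 0 < schurc N u := by
  have h1 := lead_step N hs u.isLt (hPD u (Nat.le_of_succ_le u.isLt))
  have h2 : (0:ℝ) < (N.submatrix (Fin.castLE u.isLt) (Fin.castLE u.isLt)).det :=
    (hPD (u+1) u.isLt).det_pos
  have h3 : (0:ℝ) < (N.submatrix (Fin.castLE (Nat.le_of_succ_le u.isLt))
      (Fin.castLE (Nat.le_of_succ_le u.isLt))).det :=
    (hPD u (Nat.le_of_succ_le u.isLt)).det_pos
  have hu : (⟨u.val, u.isLt⟩ : Fin T) = u := rfl
  rw [hu] at h1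
  nlinarith [h1, h2, h3]

/-- Information-gain decomposition: for a symmetric positive semidefinite kernel Gram matrix
`K` and noise standard deviation `σ > 0`, with `s_t²` the GP predictive variance at step `t`
(computed from the leading principal `t × t` submatrix), the determinant telescopes:
`det (I + σ⁻² K) = ∏ t, (1 + σ⁻² s_t²)`, equivalently
`½ log det (I + σ⁻² K) = ½ ∑ t, log (1 + σ⁻² s_t²)`. -/
theorem information_gain_telescopes (T : ℕ) (σ : ℝ) (hσ : 0 < σ)
    (K : Matrix (Fin T) (Fin T) ℝ) (hsym : K.IsSymm) (hpsd : K.PosSemidef) :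
    let s2 : Fin T → ℝ := fun t =>
      K t t -
        (fun i : Fin t => K (Fin.castLE t.isLt.le i) t) ⬝ᵥ
          ((Matrix.of fun i j : Fin t =>
              K (Fin.castLE t.isLt.le i) (Fin.castLE t.isLt.le j)) +
            σ ^ 2 • (1 : Matrix (Fin t) (Fin t) ℝ))⁻¹.mulVec
            (fun i : Fin t => K (Fin.castLE t.isLt.le i) t)
    (1 + (σ ^ 2)⁻¹ • K).det = ∏ t, (1 + (σ ^ 2)⁻¹ * s2 t) ∧
      (1 / 2) * Real.log (1 + (σ ^ 2)⁻¹ • K).det =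
        (1 / 2) * ∑ t, Real.log (1 + (σ ^ 2)⁻¹ * s2 t) := by
  intro s2
  have hσ2 : (0:ℝ) < σ ^ 2 := by positivity
  set N : Matrix (Fin T) (Fin T) ℝ := K + σ ^ 2 • 1 with hNdef
  have hNs : N.IsSymm := by
    unfold Matrix.IsSymm at hsym ⊢
    rw [hNdef, transpose_add, transpose_smul, transpose_one, hsym]
  have hPD : ∀ (t : ℕ) (h : t ≤ T),
      (N.submatrix (Fin.castLE h) (Fin.castLE h)).PosDef := by
    intro t h
    have he : N.submatrix (Fin.castLE h) (Fin.castLE h) =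
        K.submatrix (Fin.castLE h) (Fin.castLE h) + σ ^ 2 • 1 := by
      ext i j
      simp [hNdef, Matrix.one_apply, Fin.castLE_inj]
    rw [he]
    refine Matrix.PosDef.posSemidef_add (hpsd.submatrix _) ?_
    rw [smul_one_eq_diagonal]
    exact Matrix.PosDef.diagonal fun _ => by positivity
  have hschur : ∀ t : Fin T, schurc N t = σ ^ 2 + s2 t := by
    intro t
    have hk : (fun i : Fin t => N (Fin.castLE t.isLt.le i) t) =
        fun i : Fin t => K (Fin.castLE t.isLt.le i) t := by
      funext i
      have hne : (Fin.castLE t.isLt.le i) ≠ t := by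
        intro hc
        exact absurd (congrArg Fin.val hc) (Nat.ne_of_lt i.isLt)
      simp [hNdef, Matrix.one_apply_ne hne]
    have hsub : N.submatrix (Fin.castLE t.isLt.le) (Fin.castLE t.isLt.le) =
        (Matrix.of fun i j : Fin t =>
          K (Fin.castLE t.isLt.le i) (Fin.castLE t.isLt.le j)) +
          σ ^ 2 • (1 : Matrix (Fin t) (Fin t) ℝ) := by
      ext i j
      simp [hNdef, Matrix.one_apply, Fin.castLE_inj]
    have hNtt : N t t = K t t + σ ^ 2 := by
      simp [hNdef, Matrix.one_apply_eq]
    unfold schurc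
    rw [hk, hsub, hNtt]
    simp only [s2]
    ring
  have hdetN : N.det = ∏ t : Fin T, schurc N t := by
    have h0 : Fin.castLE (le_refl T) = (id : Fin T → Fin T) :=
      funext fun i => Fin.ext rfl
    have h1 := lead_det N hNs hPD T le_rfl
    rw [h0, Matrix.submatrix_id_id] at h1
    simpa using h1
  have hN1 : σ ^ 2 • (1 + (σ ^ 2)⁻¹ • K) = N := by
    rw [smul_add, smul_smul, mul_inv_cancel₀ (ne_of_gt hσ2), one_smul, hNdef, add_comm]
  have hdet1 : (σ ^ 2) ^ T * (1 + (σ ^ 2)⁻¹ • K).det = N.det := by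
    rw [← hN1, det_smul, Fintype.card_fin]
  have hfac : ∀ t : Fin T, schurc N t = σ ^ 2 * (1 + (σ ^ 2)⁻¹ * s2 t) := by
    intro t
    rw [hschur t]
    field_simp
  have hprod : N.det = (σ ^ 2) ^ T * ∏ t, (1 + (σ ^ 2)⁻¹ * s2 t) := by
    rw [hdetN]
    rw [Finset.prod_congr rfl fun t _ => hfac t, Finset.prod_mul_distrib,
      Finset.prod_const, Finset.card_univ, Fintype.card_fin]
  have hd : (1 + (σ ^ 2)⁻¹ • K).det = ∏ t, (1 + (σ ^ 2)⁻¹ * s2 t) := by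
    have := hdet1.trans hprod
    exact mul_left_cancel₀ (pow_ne_zero T (ne_of_gt hσ2)) this
  have hpos : ∀ t : Fin T, 0 < 1 + (σ ^ 2)⁻¹ * s2 t := by
    intro t
    have h1 := schurc_pos N hNs hPD t
    rw [hfac t] at h1
    nlinarith
  refine ⟨hd, ?_⟩
  rw [hd, Real.log_prod fun t _ => (hpos t).ne']
end

section
/- Let n ∈ ℕ and let M be a real symmetric positive semidefinite (n+1)×(n+1) matrix, and let M' be its leading principal n×n submatrix (the submatrix on the indices i < n, obtained via Fin.castSucc). Then Matrix.det (1 + M) ≥ Matrix.det (1 + M'), where 1 denotes the identity matrix of the appropriate size. In particular, the quantity log det(I + σ⁻² K_A) is nondecreasing under enlarging the set A of kernel evaluation points, so the maximal information gain γ_T is nondecreasing in T. -/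
open Matrix

/-- Monotonicity of the information gain: for a real symmetric positive semidefinite
`(n+1) × (n+1)` matrix `M` with leading principal `n × n` submatrix `M'`,
`det (I + M') ≤ det (I + M)`. Hence `log det (I + σ⁻² K_A)` is nondecreasing under
enlarging the set `A` of kernel evaluation points. -/
theorem det_one_add_submatrix_le (n : ℕ) (M : Matrix (Fin (n + 1)) (Fin (n + 1)) ℝ)
    (hsym : M.IsSymm) (hpsd : M.PosSemidef) :
    (1 + M.submatrix Fin.castSucc Fin.castSucc).det ≤ (1 + M).det := by
  classical
  -- a symmetric positive semidefinite square root of `M`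
  obtain ⟨B, hBpsd, hBB, hBH⟩ : ∃ B : Matrix (Fin (n + 1)) (Fin (n + 1)) ℝ,
      B.PosSemidef ∧ B * B = M ∧ Bᴴ = B :=
    open MatrixOrder in ⟨CFC.sqrt M, (CFC.sqrt_nonneg M).posSemidef,
      CFC.sqrt_mul_sqrt_self M hpsd.nonneg, (CFC.sqrt_nonneg M).posSemidef.1⟩
  have hBT : Bᵀ = B := by
    ext i j
    have := congrFun (congrFun hBH i) j
    simpa [Matrix.conjTranspose_apply] using this
  -- the inclusion matrix
  set E : Matrix (Fin (n + 1)) (Fin n) ℝ :=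
    fun i j => if i = Fin.castSucc j then 1 else 0 with hEdef
  have hmulE : ∀ {ι : Type} (X : Matrix ι (Fin (n + 1)) ℝ),
      X * E = X.submatrix id Fin.castSucc := by
    intro ι X
    ext i j
    rw [Matrix.mul_apply]
    simp [hEdef, mul_ite]
  have hEmul : ∀ {ι : Type} (X : Matrix (Fin (n + 1)) ι ℝ),
      Eᴴ * X = X.submatrix Fin.castSucc id := by
    intro ι X
    ext i j
    rw [Matrix.mul_apply]
    simp only [Matrix.conjTranspose_apply]
    simp [hEdef, Matrix.conjTranspose_apply, ite_mul]
  have hsub : M.submatrix Fin.castSucc Fin.castSucc = Eᴴ * M * E := by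
    rw [Matrix.mul_assoc, hmulE, hEmul, Matrix.submatrix_submatrix]
    rfl
  -- the special vector and the rank-one completion
  set u : Fin (n + 1) → ℝ := fun i => if i = Fin.last n then 1 else 0 with hudef
  have hEE : E * Eᴴ + replicateCol Unit u * replicateRow Unit u = 1 := by
    ext i j
    rw [Matrix.add_apply, Matrix.mul_apply]
    simp only [Matrix.conjTranspose_apply]
    simp only [Matrix.add_apply, Matrix.mul_apply, hEdef, hudef,
      Matrix.conjTranspose_apply, star_trivial, Matrix.replicateCol_apply, Matrix.replicateRow_apply,
      Finset.sum_const, Finset.card_univ, Fintype.card_unit, one_smul, smul_eq_mul]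
    refine Fin.lastCases ?_ (fun i' => ?_) i
    · have h0 : ∀ k : Fin n, (if Fin.last n = Fin.castSucc k then (1:ℝ) else 0) *
          (if j = Fin.castSucc k then (1:ℝ) else 0) = 0 := by
        intro k
        rw [if_neg (Fin.castSucc_lt_last k).ne', zero_mul]
      rw [Finset.sum_congr rfl fun k _ => h0 k, Finset.sum_const_zero, zero_add, if_pos rfl,
        one_mul]
      refine Fin.lastCases ?_ (fun j' => ?_) j
      · simp [Matrix.one_apply]
      · rw [if_neg (Fin.castSucc_lt_last j').ne,
          Matrix.one_apply_ne (Fin.castSucc_lt_last j').ne']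
    · have h1 : ∀ k : Fin n, (if Fin.castSucc i' = Fin.castSucc k then (1:ℝ) else 0) *
          (if j = Fin.castSucc k then (1:ℝ) else 0) =
          if i' = k then (if j = Fin.castSucc k then (1:ℝ) else 0) else 0 := by
        intro k
        by_cases h : i' = k <;> simp [h, Fin.castSucc_inj]
      rw [Finset.sum_congr rfl fun k _ => h1 k, Finset.sum_ite_eq _ i',
        if_pos (Finset.mem_univ _), if_neg (Fin.castSucc_lt_last i').ne, zero_mul,
        add_zero]
      refine Fin.lastCases ?_ (fun j' => ?_) j
      · rw [if_neg (Fin.castSucc_lt_last i').ne',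
          Matrix.one_apply_ne (Fin.castSucc_lt_last i').ne]
      · by_cases h : j' = i'
        · subst h; simp [Matrix.one_apply]
        · rw [if_neg (by simpa [Fin.castSucc_inj, eq_comm] using h), Matrix.one_apply_ne
            (by simpa [Fin.castSucc_inj, eq_comm] using h)]
  -- the matrix `A = 1 + B (E Eᴴ) B` and the vector `w = B u`
  set N : Matrix (Fin (n + 1)) (Fin (n + 1)) ℝ := B * (E * Eᴴ) * B with hNdef
  have hNpsd : N.PosSemidef := by
    have := (posSemidef_self_mul_conjTranspose E).mul_mul_conjTranspose_same B
    rwa [hBH] at this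
  set A : Matrix (Fin (n + 1)) (Fin (n + 1)) ℝ := 1 + N with hAdef
  have hone : (1 : Matrix (Fin (n + 1)) (Fin (n + 1)) ℝ).PosDef := by
    exact Matrix.PosDef.one
  have hApos : A.PosDef := hone.add_posSemidef hNpsd
  set w : Fin (n + 1) → ℝ := B *ᵥ u with hwdef
  -- decompose `1 + M`
  have hdecomp : 1 + M = A + replicateCol Unit w * replicateRow Unit w := by
    have hvm : u ᵥ* B = w := by rw [hwdef, ← Matrix.mulVec_transpose, hBT]
    have hrk : B * (replicateCol Unit u * replicateRow Unit u) * B = replicateCol Unit w * replicateRow Unit w := by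
      rw [← Matrix.mul_assoc, ← Matrix.replicateCol_mulVec, ← hwdef, Matrix.mul_assoc,
        ← Matrix.replicateRow_vecMul, hvm]
    rw [hAdef, hNdef, add_assoc, ← hrk, ← Matrix.add_mul, ← Matrix.mul_add, hEE,
      Matrix.mul_one, hBB]
  -- identify `det (1 + M')` with `det A` via the Weinstein–Aronszajn identity
  have hassoc1 : Eᴴ * M * E = (Eᴴ * B) * (B * E) := by
    rw [← hBB, ← Matrix.mul_assoc Eᴴ B B, Matrix.mul_assoc (Eᴴ * B) B E]
  have hassoc2 : (B * E) * (Eᴴ * B) = N := by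
    rw [hNdef, ← Matrix.mul_assoc (B * E) Eᴴ B, Matrix.mul_assoc B E Eᴴ]
  have hdetA : (1 + M.submatrix Fin.castSucc Fin.castSucc).det = A.det := by
    rw [hsub, hassoc1, Matrix.det_one_add_mul_comm, hassoc2, hAdef]
  -- the matrix determinant lemma
  have hAdet : IsUnit A.det := hApos.det_pos.ne'.isUnit
  have hdet : (1 + M).det = A.det * (1 + w ⬝ᵥ (A⁻¹ *ᵥ w)) := by
    rw [hdecomp, Matrix.det_add_replicateCol_mul_replicateRow (ι := Unit) hAdet w w, Matrix.mul_assoc,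
      ← Matrix.replicateCol_mulVec]
    congr 1
    rw [Matrix.det_unique, Matrix.add_apply, Matrix.one_apply_eq, Matrix.replicateRow_mul_replicateCol_apply]
  have hquad : 0 ≤ w ⬝ᵥ (A⁻¹ *ᵥ w) := by
    have := hApos.inv.posSemidef.dotProduct_mulVec_nonneg w
    simpa using this
  rw [hdetA, hdet]
  nlinarith [hApos.det_pos]
end
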